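/- arXiv:1704.07462 — 5 statements merged into one kernel-verified Lean document; each statement's English description precedes it below -/
import Mathlib

section
/- Let f : ℝⁿ → ℝ be a homogeneous polynomial of even degree d ≥ 2 that is convex and positive definite. Then f is strictly convex, i.e., f(λx + (1−λ)y) < λf(x) + (1−λ)f(y) for all x ≠ y and λ ∈ (0,1). -/
open MvPolynomial Set

theorem stmt1 (n d : ℕ) (hn : 2 ≤ n) (hd : 2 ≤ d) (hdeven : Even d)
    (f : MvPolynomial (Fin n) ℝ) (hf : f.IsHomogeneous d)
    (hconv : ConvexOn ℝ univ (fun x => eval x f))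
    (hpos : ∀ x : Fin n → ℝ, x ≠ 0 → 0 < eval x f) :
    ∀ x y : Fin n → ℝ, x ≠ y → ∀ l : ℝ, l ∈ Ioo (0 : ℝ) 1 →
      eval (l • x + (1 - l) • y) f < l * eval x f + (1 - l) * eval y f := by
  have hsmul : ∀ (c : ℝ) (w : Fin n → ℝ), eval (c • w) f = c ^ d * eval w f := by
    intro c w
    rw [eval_eq, eval_eq, Finset.mul_sum]
    refine Finset.sum_congr rfl fun m hm => ?_
    have h1 := hf (MvPolynomial.mem_support_iff.mp hm)
    have hdeg : ∑ i ∈ m.support, m i = d := by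
      rw [show (1 : Fin n → ℕ) = fun _ => 1 from rfl, ← Finsupp.degree_eq_weight_one] at h1
      rw [← h1, Finsupp.degree_apply]
    simp only [Pi.smul_apply, smul_eq_mul, mul_pow, Finset.prod_mul_distrib,
      Finset.prod_pow_eq_pow_sum, hdeg]
    ring
  have haev : ∀ (σ1 : Fin n → Polynomial ℝ) (t : ℝ),
      (MvPolynomial.aeval σ1 f).eval t = eval (fun i => (σ1 i).eval t) f := by
    intro σ1 t
    have h := MvPolynomial.comp_aeval_apply (f := σ1)
      (Polynomial.aeval t : Polynomial ℝ →ₐ[ℝ] ℝ) f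
    simpa using h
  have key : ∀ (u w : Fin n → ℝ) (a b : ℝ), 0 ≤ a → 0 ≤ b → a + b = 1 →
      eval (a • u + b • w) f ≤ a * eval u f + b * eval w f := fun u w a b ha hb hab =>
    hconv.2 (mem_univ u) (mem_univ w) ha hb hab
  intro x y hxy l hl
  obtain ⟨hl0, hl1⟩ := hl
  by_contra hlt
  push_neg at hlt
  set A := eval x f with hA
  set B := eval y f with hB
  have hle : ∀ t : ℝ, t ∈ Icc (0:ℝ) 1 →
      eval (t • x + (1-t) • y) f ≤ t * A + (1-t) * B := by
    intro t ht
    exact key x y t (1-t) ht.1 (by linarith [ht.2]) (by ring)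
  have heq : eval (l • x + (1-l) • y) f = l * A + (1-l) * B :=
    le_antisymm (hle l ⟨hl0.le, hl1.le⟩) hlt
  have haff : ∀ t : ℝ, t ∈ Icc (0:ℝ) 1 →
      eval (t • x + (1-t) • y) f = t * A + (1-t) * B := by
    intro t ht
    refine le_antisymm (hle t ht) ?_
    rcases le_or_gt t l with hcase | hcase
    · have ht1 : t < 1 := lt_of_le_of_lt hcase hl1
      have h1t : (0:ℝ) < 1 - t := by linarith
      obtain ⟨μ, hμ0, hμ1, hμl⟩ : ∃ μ : ℝ, 0 < μ ∧ μ ≤ 1 ∧ μ * (1 - t) = 1 - l :=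
        ⟨(1-l)/(1-t), div_pos (by linarith) h1t,
          by rw [div_le_one h1t]; linarith, div_mul_cancel₀ _ (ne_of_gt h1t)⟩
      have hvec : μ • (t • x + (1-t) • y) + (1-μ) • x = l • x + (1-l) • y := by
        funext i
        simp only [Pi.add_apply, Pi.smul_apply, smul_eq_mul]
        linear_combination (y i - x i) * hμl
      have hcv := key (t • x + (1-t) • y) x μ (1-μ) hμ0.le (by linarith) (by ring)
      rw [hvec] at hcv
      
      rw [heq] at hcv
      have hlin : l * A + (1-l) * B = μ * (t * A + (1-t) * B) + (1-μ) * A := by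
        linear_combination (A - B) * hμl
      have h2 : μ * (t * A + (1-t) * B) ≤ μ * eval (t • x + (1-t) • y) f := by
        linarith
      exact le_of_mul_le_mul_left h2 hμ0
    · have ht0 : 0 < t := lt_trans hl0 hcase
      obtain ⟨μ, hμ0, hμ1, hμl⟩ : ∃ μ : ℝ, 0 < μ ∧ μ ≤ 1 ∧ μ * t = l :=
        ⟨l/t, div_pos hl0 ht0, by rw [div_le_one ht0]; linarith,
          div_mul_cancel₀ _ (ne_of_gt ht0)⟩
      have hvec : μ • (t • x + (1-t) • y) + (1-μ) • y = l • x + (1-l) • y := by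
        funext i
        simp only [Pi.add_apply, Pi.smul_apply, smul_eq_mul]
        linear_combination (x i - y i) * hμl
      have hcv := key (t • x + (1-t) • y) y μ (1-μ) hμ0.le (by linarith) (by ring)
      rw [hvec] at hcv
      
      rw [heq] at hcv
      have hlin : l * A + (1-l) * B = μ * (t * A + (1-t) * B) + (1-μ) * B := by
        linear_combination (B - A) * hμl
      have h2 : μ * (t * A + (1-t) * B) ≤ μ * eval (t • x + (1-t) • y) f := by
        linarith
      exact le_of_mul_le_mul_left h2 hμ0
  -- extend to all t by polynomial identity
  set P : Polynomial ℝ := MvPolynomial.aeval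
    (fun i => Polynomial.C (y i) + Polynomial.C (x i - y i) * Polynomial.X) f with hP
  have hPev : ∀ t : ℝ, P.eval t = eval (t • x + (1-t) • y) f := by
    intro t
    rw [hP, haev]
    have harg : (fun i => Polynomial.eval t
        (Polynomial.C (y i) + Polynomial.C (x i - y i) * Polynomial.X)) = t • x + (1-t) • y := by
      funext i
      simp only [Polynomial.eval_add, Polynomial.eval_mul, Polynomial.eval_C, Polynomial.eval_X,
        Pi.add_apply, Pi.smul_apply, smul_eq_mul]
      ring
    rw [harg]
  set Q : Polynomial ℝ := P - (Polynomial.C A * Polynomial.X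
    + Polynomial.C B * (1 - Polynomial.X)) with hQ
  have hQ0 : Q = 0 := by
    apply Polynomial.eq_zero_of_infinite_isRoot
    apply Set.Infinite.mono ?_ (Set.Icc_infinite (zero_lt_one (α := ℝ)))
    intro t ht
    simp only [mem_setOf_eq, Polynomial.IsRoot, hQ, Polynomial.eval_sub, Polynomial.eval_add,
      Polynomial.eval_mul, Polynomial.eval_C, Polynomial.eval_X, Polynomial.eval_one,
      Polynomial.eval_sub]
    rw [hPev t, haff t ht]
    ring
  have hall : ∀ t : ℝ, eval (t • x + (1-t) • y) f = t * A + (1-t) * B := by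
    intro t
    have h := congrArg (Polynomial.eval t) hQ0
    simp only [hQ, Polynomial.eval_sub, Polynomial.eval_add, Polynomial.eval_mul,
      Polynomial.eval_C, Polynomial.eval_X, Polynomial.eval_one, Polynomial.eval_zero] at h
    rw [hPev t] at h
    linarith [h]
  -- homogeneity flip
  have hstep : ∀ s : ℝ, s ≠ 0 → eval (fun i => (x i - y i) + y i * s) f
      = B * s^d + (A - B) * s^(d-1) := by
    intro s hs
    have h1 : s⁻¹ • x + (1 - s⁻¹) • y = s⁻¹ • (fun i => (x i - y i) + y i * s) := by
      funext i
      simp only [Pi.add_apply, Pi.smul_apply, smul_eq_mul]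
      field_simp
      ring
    have h2 := hall s⁻¹
    rw [h1, hsmul] at h2
    have hsd : s ^ d = s ^ (d-1) * s := by
      rw [← pow_succ]
      congr 1
      omega
    have hinv : (s⁻¹) ^ d * s ^ d = 1 := by
      rw [← mul_pow, inv_mul_cancel₀ hs, one_pow]
    have h3 := congrArg (fun z => z * s ^ d) h2
    rw [mul_comm ((s⁻¹)^d) _, mul_assoc, hinv, mul_one] at h3
    rw [h3, hsd]
    field_simp
    ring
  set R2 : Polynomial ℝ := MvPolynomial.aeval
      (fun i => Polynomial.C (x i - y i) + Polynomial.C (y i) * Polynomial.X) f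
    - (Polynomial.C B * Polynomial.X ^ d
       + Polynomial.C (A - B) * Polynomial.X ^ (d-1)) with hR2
  have hR0 : R2 = 0 := by
    apply Polynomial.eq_zero_of_infinite_isRoot
    apply Set.Infinite.mono ?_ ((Set.finite_singleton (0:ℝ)).infinite_compl)
    intro s hs
    have hs0 : s ≠ 0 := by simpa using hs
    simp only [mem_setOf_eq, Polynomial.IsRoot, hR2, Polynomial.eval_sub, Polynomial.eval_add,
      Polynomial.eval_mul, Polynomial.eval_C, Polynomial.eval_pow, Polynomial.eval_X]
    rw [haev]
    have := hstep s hs0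
    simp only [Polynomial.eval_add, Polynomial.eval_mul, Polynomial.eval_C,
      Polynomial.eval_X] at this ⊢
    rw [this]
    ring
  have hfin := congrArg (Polynomial.eval 0) hR0
  simp only [hR2, Polynomial.eval_sub, Polynomial.eval_add, Polynomial.eval_mul,
    Polynomial.eval_C, Polynomial.eval_pow, Polynomial.eval_X, Polynomial.eval_zero] at hfin
  rw [haev] at hfin
  have hd0 : (0:ℝ) ^ d = 0 := zero_pow (by omega)
  have hd1 : (0:ℝ) ^ (d-1) = 0 := zero_pow (by omega)
  rw [hd0, hd1] at hfin
  simp only [mul_zero, add_zero, sub_zero] at hfin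
  have hv : (fun i => x i - y i) ≠ (0 : Fin n → ℝ) := by
    intro h
    apply hxy
    funext i
    have := congrFun h i
    simpa [sub_eq_zero] using this
  have hposv := hpos _ hv
  have harg2 : (fun i => Polynomial.eval 0
      (Polynomial.C (x i - y i) + Polynomial.C (y i) * Polynomial.X)) = fun i => x i - y i := by
    funext i
    simp
  rw [harg2] at hfin
  linarith
end

section
/- Let f : ℝⁿ → ℝ be a strictly convex homogeneous polynomial of even degree d ≥ 2. Then the function x ↦ f(x)^(1/d) is a norm on ℝⁿ. -/
open MvPolynomial Set

lemma eval_smul_homog {n d : ℕ} (f : MvPolynomial (Fin n) ℝ) (hf : f.IsHomogeneous d)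
    (c : ℝ) (x : Fin n → ℝ) : eval (c • x) f = c ^ d * eval x f := by
  rw [eval_eq, eval_eq, Finset.mul_sum]
  apply Finset.sum_congr rfl
  intro m hm
  have hdeg : ∑ i ∈ m.support, m i = d := by
    have := hf (mem_support_iff.mp hm)
    simpa [Finsupp.weight_apply, Finsupp.sum] using this
  simp only [Pi.smul_apply, smul_eq_mul, mul_pow, Finset.prod_mul_distrib,
    Finset.prod_pow_eq_pow_sum, hdeg]
  ring

theorem stmt2 (n d : ℕ) (hd : 2 ≤ d) (hdeven : Even d)
    (f : MvPolynomial (Fin n) ℝ) (hf : f.IsHomogeneous d)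
    (hstrict : ∀ x y : Fin n → ℝ, x ≠ y → ∀ l : ℝ, l ∈ Ioo (0 : ℝ) 1 →
      eval (l • x + (1 - l) • y) f < l * eval x f + (1 - l) * eval y f)
    (g : (Fin n → ℝ) → ℝ) (hg : ∀ x, g x = (eval x f) ^ ((d : ℝ)⁻¹)) :
    (∀ x : Fin n → ℝ, x ≠ 0 → 0 < g x) ∧ g 0 = 0 ∧
    (∀ (c : ℝ) (x : Fin n → ℝ), g (c • x) = |c| * g x) ∧
    (∀ x y : Fin n → ℝ, g (x + y) ≤ g x + g y) := by
  have hd0 : d ≠ 0 := by omega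
  have hdR : ((d : ℝ)) ≠ 0 := Nat.cast_ne_zero.mpr hd0
  -- eval at 0 is 0
  have hf0 : eval (0 : Fin n → ℝ) f = 0 := by
    have := eval_smul_homog f hf 0 0
    simpa [hd0, zero_pow] using this
  -- eval at -x equals eval at x
  have hneg : ∀ x : Fin n → ℝ, eval (-x) f = eval x f := by
    intro x
    have := eval_smul_homog f hf (-1) x
    simpa [hdeven.neg_one_pow] using this
  -- positivity of eval for x ≠ 0
  have hpos : ∀ x : Fin n → ℝ, x ≠ 0 → 0 < eval x f := by
    intro x hx
    have hne : x ≠ -x := by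
      intro h
      apply hx
      have : (2 : ℝ) • x = 0 := by
        funext i
        have := congrFun h i
        simp only [Pi.neg_apply] at this
        simp [Pi.smul_apply]
        linarith
      have := congrArg (fun v => (2 : ℝ)⁻¹ • v) this
      simpa [smul_smul] using this
    have := hstrict x (-x) hne (1/2) (by norm_num)
    have hz : (1/2 : ℝ) • x + (1 - 1/2 : ℝ) • (-x) = 0 := by
      funext i; simp; ring
    rw [hz, hf0, hneg] at this
    linarith
  have hnn : ∀ x : Fin n → ℝ, 0 ≤ eval x f := by
    intro x
    by_cases hx : x = 0
    · rw [hx, hf0]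
    · exact (hpos x hx).le
  have hgpos : ∀ x : Fin n → ℝ, x ≠ 0 → 0 < g x := by
    intro x hx
    rw [hg]
    exact Real.rpow_pos_of_pos (hpos x hx) _
  have hg0 : g 0 = 0 := by
    rw [hg, hf0, Real.zero_rpow (inv_ne_zero hdR)]
  have hghom : ∀ (c : ℝ) (x : Fin n → ℝ), g (c • x) = |c| * g x := by
    intro c x
    rw [hg, hg, eval_smul_homog f hf]
    rw [← hdeven.pow_abs c]
    rw [Real.mul_rpow (pow_nonneg (abs_nonneg c) d) (hnn x)]
    congr 1
    rw [← Real.rpow_natCast |c| d, ← Real.rpow_mul (abs_nonneg c),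
      mul_inv_cancel₀ hdR, Real.rpow_one]
  refine ⟨hgpos, hg0, hghom, ?_⟩
  intro x y
  by_cases hx : x = 0
  · simp [hx, hg0]
  by_cases hy : y = 0
  · simp [hy, hg0]
  set a := g x with ha_def
  set b := g y with hb_def
  have ha : 0 < a := hgpos x hx
  have hb : 0 < b := hgpos y hy
  have hab : 0 < a + b := by linarith
  -- a^d = eval x f
  have hpow : ∀ z : Fin n → ℝ, (g z) ^ d = eval z f := by
    intro z
    rw [hg, ← Real.rpow_natCast ((eval z f) ^ ((d:ℝ)⁻¹)) d,
      ← Real.rpow_mul (hnn z), inv_mul_cancel₀ hdR, Real.rpow_one]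
  have hu : eval (a⁻¹ • x) f = 1 := by
    rw [eval_smul_homog f hf, inv_pow, hpow x, inv_mul_cancel₀ (hpos x hx).ne']
  have hv : eval (b⁻¹ • y) f = 1 := by
    rw [eval_smul_homog f hf, inv_pow, hpow y, inv_mul_cancel₀ (hpos y hy).ne']
  set l : ℝ := a / (a + b) with hl_def
  have hl : l ∈ Ioo (0:ℝ) 1 := by
    constructor
    · positivity
    · rw [div_lt_one hab]; linarith
  have hl1 : 1 - l = b / (a + b) := by rw [hl_def]; field_simp; ring
  have hzeq : (a + b)⁻¹ • (x + y) = l • (a⁻¹ • x) + (1 - l) • (b⁻¹ • y) := by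
    rw [hl1]
    funext i
    simp only [Pi.smul_apply, Pi.add_apply, smul_eq_mul, hl_def]
    field_simp
  have hkey : eval ((a + b)⁻¹ • (x + y)) f ≤ 1 := by
    rw [hzeq]
    by_cases huv : a⁻¹ • x = b⁻¹ • y
    · rw [huv, ← add_smul]
      simp only [add_sub_cancel, one_smul]
      exact hv.le
    · have := hstrict _ _ huv l hl
      rw [hu, hv] at this
      linarith
  have hxy : x + y = (a + b) • ((a + b)⁻¹ • (x + y)) := by
    rw [smul_inv_smul₀ hab.ne']
  calc g (x + y) = (eval (x + y) f) ^ ((d:ℝ)⁻¹) := hg _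
    _ = ((a + b) ^ d * eval ((a + b)⁻¹ • (x + y)) f) ^ ((d:ℝ)⁻¹) := by
        rw [hxy, eval_smul_homog f hf, inv_smul_smul₀ hab.ne']
    _ ≤ ((a + b) ^ d * 1) ^ ((d:ℝ)⁻¹) := by
        apply Real.rpow_le_rpow
        · exact mul_nonneg (by positivity) (hnn _)
        · exact mul_le_mul_of_nonneg_left hkey (by positivity)
        · positivity
    _ = a + b := by
        rw [mul_one, ← Real.rpow_natCast (a+b) d, ← Real.rpow_mul hab.le,
          mul_inv_cancel₀ hdR, Real.rpow_one]
end

section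
/- Let ‖·‖ be a norm on ℝⁿ and d an even positive integer. Define f_d(x) = (1/vol(B°)) ∫_{B°} ⟨x,y⟩^d dy. Then for all x ∈ ℝⁿ, f_d(x)^(1/d) ≥ (d/(n+d)) · (n/(n+d))^(n/d) · ‖x‖. -/
open Set MeasureTheory Pointwise
set_option maxHeartbeats 2000000
open scoped RealInnerProductSpace

theorem stmt9 (n : ℕ) (hn : 1 ≤ n) (d : ℕ) (hd : 0 < d) (hdeven : Even d)
    (N : EuclideanSpace ℝ (Fin n) → ℝ)
    (hpos : ∀ x, x ≠ 0 → 0 < N x) (hzero : N 0 = 0)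
    (hhom : ∀ (c : ℝ) x, N (c • x) = |c| * N x)
    (htri : ∀ x y, N (x + y) ≤ N x + N y)
    (B Bpolar : Set (EuclideanSpace ℝ (Fin n)))
    (hB : B = {x | N x ≤ 1})
    (hBpolar : Bpolar = {y | ∀ x ∈ B, ⟪x, y⟫ ≤ 1})
    (f : EuclideanSpace ℝ (Fin n) → ℝ)
    (hf : ∀ x, f x = ((volume Bpolar).toReal)⁻¹ * ∫ y in Bpolar, (⟪x, y⟫ : ℝ) ^ d) :
    ∀ x : EuclideanSpace ℝ (Fin n), ((d : ℝ)/(n + d)) * ((n : ℝ)/(n + d)) ^ ((n : ℝ)/d) * N x ≤ (f x) ^ ((d : ℝ)⁻¹) := by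
  classical
  -- Basic facts about N
  have hNneg : ∀ z : EuclideanSpace ℝ (Fin n), 0 ≤ N z := by
    intro z
    rcases eq_or_ne z 0 with rfl | h
    · simp [hzero]
    · exact (hpos z h).le
  have hNsum : ∀ (g : Fin n → EuclideanSpace ℝ (Fin n)), N (∑ i, g i) ≤ ∑ i, N (g i) := by
    intro g
    exact Finset.le_sum_of_subadditive N hzero.le htri _ _
  set C : ℝ := (∑ i, N (EuclideanSpace.single i (1:ℝ))) + 1 with hC
  have hCpos : 0 < C := by
    have : 0 ≤ ∑ i, N (EuclideanSpace.single i (1:ℝ)) :=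
      Finset.sum_nonneg fun i _ => hNneg _
    linarith
  have hcoord : ∀ (z : EuclideanSpace ℝ (Fin n)) (i : Fin n), |z i| ≤ ‖z‖ := by
    intro z i
    have h : ⟪EuclideanSpace.single i (1:ℝ), z⟫ = z i := by
      simp [EuclideanSpace.inner_single_left]
    have h2 := abs_real_inner_le_norm (EuclideanSpace.single i (1:ℝ)) z
    rwa [h, EuclideanSpace.norm_single, norm_one, one_mul] at h2
  have hNle : ∀ z : EuclideanSpace ℝ (Fin n), N z ≤ C * ‖z‖ := by
    intro z
    have hz : z = ∑ i, z i • EuclideanSpace.single i (1:ℝ) := by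
      have := (EuclideanSpace.basisFun (Fin n) ℝ).sum_repr z
      simp only [EuclideanSpace.basisFun_repr] at this
      simpa using this.symm
    calc N z = N (∑ i, z i • EuclideanSpace.single i (1:ℝ)) := by rw [← hz]
      _ ≤ ∑ i, N (z i • EuclideanSpace.single i (1:ℝ)) := hNsum _
      _ = ∑ i, |z i| * N (EuclideanSpace.single i (1:ℝ)) := by simp [hhom]
      _ ≤ ∑ i, ‖z‖ * N (EuclideanSpace.single i (1:ℝ)) :=
          Finset.sum_le_sum fun i _ => mul_le_mul_of_nonneg_right (hcoord z i) (hNneg _)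
      _ = (∑ i, N (EuclideanSpace.single i (1:ℝ))) * ‖z‖ := by
          rw [← Finset.mul_sum, mul_comm]
      _ ≤ C * ‖z‖ := by
          apply mul_le_mul_of_nonneg_right _ (norm_nonneg z)
          rw [hC]; linarith
  have hNsub : ∀ a b : EuclideanSpace ℝ (Fin n), N a - N b ≤ N (a - b) := by
    intro a b
    have := htri (a - b) b
    simp only [sub_add_cancel] at this
    linarith
  have hNsymm : ∀ a : EuclideanSpace ℝ (Fin n), N (-a) = N a := by
    intro a
    have : (-a) = (-1 : ℝ) • a := by simp
    rw [this, hhom]; simp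
  have hNcont : Continuous N := by
    have : LipschitzWith (Real.toNNReal C) N := by
      apply LipschitzWith.of_dist_le_mul
      intro a b
      rw [Real.dist_eq, dist_eq_norm, Real.coe_toNNReal _ hCpos.le]
      rw [abs_sub_le_iff]
      constructor
      · exact (hNsub a b).trans (hNle _)
      · have := (hNsub b a).trans (hNle (b - a))
        rwa [show b - a = -(a-b) from (neg_sub a b).symm, norm_neg] at this
    exact this.continuous
  -- lower bound for N
  haveI : Nonempty (Fin n) := ⟨⟨0, hn⟩⟩
  obtain ⟨m, hm0, hmle⟩ : ∃ m > 0, ∀ z : EuclideanSpace ℝ (Fin n), m * ‖z‖ ≤ N z := by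
    have hne : (Metric.sphere (0:EuclideanSpace ℝ (Fin n)) 1).Nonempty := by
      apply NormedSpace.sphere_nonempty.mpr
      norm_num
    obtain ⟨z0, hz0mem, hz0min⟩ :=
      (isCompact_sphere (0:EuclideanSpace ℝ (Fin n)) 1).exists_isMinOn hne hNcont.continuousOn
    have hz0 : z0 ≠ 0 := by
      intro h
      rw [h, Metric.mem_sphere, dist_self] at hz0mem
      norm_num at hz0mem
    refine ⟨N z0, hpos z0 hz0, ?_⟩
    intro z
    rcases eq_or_ne z 0 with rfl | hz
    · simp [hzero]
    · have hznorm : ‖z‖ ≠ 0 := norm_ne_zero_iff.mpr hz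
      have hzs : ‖z‖⁻¹ • z ∈ Metric.sphere (0:EuclideanSpace ℝ (Fin n)) 1 := by
        simp [norm_smul, abs_of_nonneg (inv_nonneg.mpr (norm_nonneg z)),
          inv_mul_cancel₀ hznorm]
      have h1 : N z0 ≤ N (‖z‖⁻¹ • z) := hz0min hzs
      rw [hhom] at h1
      rw [abs_of_nonneg (inv_nonneg.mpr (norm_nonneg z))] at h1
      have hzpos : 0 < ‖z‖ := lt_of_le_of_ne (norm_nonneg z) (Ne.symm hznorm)
      calc N z0 * ‖z‖ ≤ (‖z‖⁻¹ * N z) * ‖z‖ :=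
            mul_le_mul_of_nonneg_right h1 (norm_nonneg z)
        _ = N z := by field_simp
  -- Bpolar facts
  have hmemB : ∀ z : EuclideanSpace ℝ (Fin n), z ∈ B ↔ N z ≤ 1 := by rw [hB]; intro z; rfl
  have hmemP : ∀ y : EuclideanSpace ℝ (Fin n), y ∈ Bpolar ↔ ∀ z ∈ B, ⟪z, y⟫ ≤ 1 := by rw [hBpolar]; intro y; rfl
  have hconv : Convex ℝ Bpolar := by
    intro y1 hy1 y2 hy2 a b ha hb hab
    rw [hmemP] at *
    intro z hz
    rw [inner_add_right, real_inner_smul_right, real_inner_smul_right]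
    calc a * ⟪z,y1⟫ + b * ⟪z,y2⟫ ≤ a * 1 + b * 1 :=
        add_le_add (mul_le_mul_of_nonneg_left (hy1 z hz) ha)
          (mul_le_mul_of_nonneg_left (hy2 z hz) hb)
      _ = 1 := by linarith
  have hclosed : IsClosed Bpolar := by
    rw [hBpolar]
    have : {y : EuclideanSpace ℝ (Fin n) | ∀ x ∈ B, ⟪x, y⟫ ≤ 1} = ⋂ x ∈ B, {y : EuclideanSpace ℝ (Fin n) | ⟪x, y⟫ ≤ 1} := by
      ext y; simp
    rw [this]
    exact isClosed_biInter fun z _ =>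
      isClosed_le (Continuous.inner continuous_const continuous_id) continuous_const
  have hsym : ∀ y ∈ Bpolar, -y ∈ Bpolar := by
    intro y hy
    rw [hmemP] at *
    intro z hz
    have hz' : -z ∈ B := by
      rw [hmemB] at *
      rwa [hNsymm]
    have := hy (-z) hz'
    rwa [inner_neg_left, ← inner_neg_right] at this
  have hball_sub : Metric.closedBall (0:EuclideanSpace ℝ (Fin n)) m ⊆ Bpolar := by
    intro y hy
    rw [Metric.mem_closedBall, dist_zero_right] at hy
    rw [hmemP]
    intro z hz
    rw [hmemB] at hz
    have h1 : m * ‖z‖ ≤ 1 := (hmle z).trans hz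
    calc ⟪z, y⟫ ≤ ‖z‖ * ‖y‖ := real_inner_le_norm z y
      _ ≤ ‖z‖ * m := mul_le_mul_of_nonneg_left hy (norm_nonneg z)
      _ = m * ‖z‖ := by ring
      _ ≤ 1 := h1
  have hsub_ball : Bpolar ⊆ Metric.closedBall (0:EuclideanSpace ℝ (Fin n)) C := by
    intro y hy
    rw [Metric.mem_closedBall, dist_zero_right]
    rcases eq_or_ne y 0 with rfl | hy0
    · simpa using hCpos.le
    · have hynorm : (0:ℝ) < ‖y‖ := norm_pos_iff.mpr hy0
      set z : EuclideanSpace ℝ (Fin n) := (C⁻¹ * ‖y‖⁻¹) • y with hzdef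
      have hzB : z ∈ B := by
        rw [hmemB]
        calc N z ≤ C * ‖z‖ := hNle z
          _ = C * (C⁻¹ * ‖y‖⁻¹ * ‖y‖) := by
              rw [hzdef, norm_smul]
              congr 1
              rw [Real.norm_eq_abs, abs_of_nonneg (by positivity)]
          _ = 1 := by field_simp
      rw [hmemP] at hy
      have := hy z hzB
      rw [hzdef, real_inner_smul_left, real_inner_self_eq_norm_sq] at this
      have h2 : C⁻¹ * ‖y‖⁻¹ * ‖y‖ ^ 2 = ‖y‖ / C := by field_simp
      rw [h2] at this
      calc ‖y‖ = (‖y‖ / C) * C := by field_simp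
        _ ≤ 1 * C := mul_le_mul_of_nonneg_right this hCpos.le
        _ = C := one_mul C
  have hmeasP : MeasurableSet Bpolar := hclosed.measurableSet
  have hboundP : Bornology.IsBounded Bpolar :=
    (Metric.isBounded_closedBall).subset hsub_ball
  have hcompact : IsCompact Bpolar := Metric.isCompact_of_isClosed_isBounded hclosed hboundP
  have hvol_pos : 0 < volume Bpolar :=
    lt_of_lt_of_le (Metric.measure_closedBall_pos volume (0:EuclideanSpace ℝ (Fin n)) hm0) (measure_mono hball_sub)
  have hvol_fin : volume Bpolar < ⊤ := hcompact.measure_lt_top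
  have hvolR_pos : 0 < (volume Bpolar).toReal :=
    ENNReal.toReal_pos hvol_pos.ne' hvol_fin.ne
  -- main
  intro x
  rcases eq_or_ne x 0 with rfl | hx
  · have hf0 : f 0 = 0 := by
      rw [hf]
      have : ∀ y : EuclideanSpace ℝ (Fin n), (⟪(0:EuclideanSpace ℝ (Fin n)), y⟫:ℝ) ^ d = 0 := by
        intro y; rw [inner_zero_left]; exact zero_pow hd.ne'
      simp [this]
      exact Or.inr (by simp [hd.ne'])
    rw [hf0, hzero, Real.zero_rpow (by positivity : ((d:ℝ))⁻¹ ≠ 0)]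
    simp
  -- x ≠ 0 case
  set r := N x with hr
  have hrpos : 0 < r := hpos x hx
  -- Hahn-Banach: get ystar ∈ Bpolar with ⟪x, ystar⟫ = r
  have hxnorm : (0:ℝ) < ‖x‖ := norm_pos_iff.mpr hx
  set φ₀ : EuclideanSpace ℝ (Fin n) →ₗ[ℝ] ℝ := (r / ‖x‖^2) • (innerSL ℝ x : EuclideanSpace ℝ (Fin n) →L[ℝ] ℝ).toLinearMap with hφ₀
  have hφ₀_apply : ∀ z : EuclideanSpace ℝ (Fin n), φ₀ z = (r / ‖x‖^2) * ⟪x, z⟫ := by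
    intro z; simp [hφ₀]
  have hφ₀x : φ₀ x = r := by
    rw [hφ₀_apply, real_inner_self_eq_norm_sq]
    field_simp
  obtain ⟨φ, hφ₁, hφ₂⟩ := exists_extension_of_le_sublinear (φ₀.toPMap (Submodule.span ℝ {x})) N
    (fun c hc z => by rw [hhom, abs_of_pos hc])
    htri
    (by
      rintro ⟨z, hz⟩
      obtain ⟨c, rfl⟩ := Submodule.mem_span_singleton.mp hz
      erw [LinearMap.toPMap_apply]
      simp only [hφ₀_apply]
      rw [real_inner_smul_right, real_inner_self_eq_norm_sq, hhom]
      have : r / ‖x‖ ^ 2 * (c * ‖x‖ ^ 2) = c * r := by field_simp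
      rw [this]
      exact mul_le_mul_of_nonneg_right (le_abs_self c) hrpos.le)
  have hφx : φ x = r := by
    have := hφ₁ ⟨x, Submodule.mem_span_singleton_self x⟩
    erw [LinearMap.toPMap_apply] at this
    simpa [hφ₀x] using this
  set ystar : EuclideanSpace ℝ (Fin n) := (InnerProductSpace.toDual ℝ (EuclideanSpace ℝ (Fin n))).symm (LinearMap.toContinuousLinearMap φ)
    with hystar
  have hyst : ∀ z : EuclideanSpace ℝ (Fin n), ⟪z, ystar⟫ = φ z := by
    intro z
    rw [real_inner_comm, hystar]
    exact InnerProductSpace.toDual_symm_apply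
  have hystar_mem : ystar ∈ Bpolar := by
    rw [hmemP]
    intro z hz
    rw [hmemB] at hz
    rw [hyst]
    exact (hφ₂ z).trans hz
  have hxy : ⟪x, ystar⟫ = r := by rw [hyst, hφx]
  -- the sets
  have hnd : (0:ℝ) < (n:ℝ) + d := by positivity
  set s : ℝ := d / ((n:ℝ) + d) with hs
  have hs0 : 0 < s := by positivity
  have hs1 : s < 1 := by
    rw [hs, div_lt_one hnd]
    have : (1:ℝ) ≤ (n:ℝ) := by exact_mod_cast hn
    linarith
  have h1s : 1 - s = (n:ℝ) / ((n:ℝ) + d) := by rw [hs]; field_simp; ring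
  have h1s0 : 0 < 1 - s := by linarith
  set t : ℝ := s * r with ht
  have htpos : 0 < t := mul_pos hs0 hrpos
  set H : Set (EuclideanSpace ℝ (Fin n)) := Bpolar ∩ {y | 0 ≤ ⟪x, y⟫} with hH
  set A : Set (EuclideanSpace ℝ (Fin n)) := Bpolar ∩ {y | t ≤ |⟪x, y⟫|} with hA
  have hHmeas : MeasurableSet H :=
    hmeasP.inter ((isClosed_le continuous_const
      (Continuous.inner continuous_const continuous_id)).measurableSet)
  have hAmeas : MeasurableSet A :=
    hmeasP.inter ((isClosed_le continuous_const
      ((Continuous.inner continuous_const continuous_id).abs)).measurableSet)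
  set K : Set (EuclideanSpace ℝ (Fin n)) := (s • ystar) +ᵥ ((1 - s) • H) with hK
  have hKmeas : MeasurableSet K :=
    (hHmeas.const_smul_of_ne_zero h1s0.ne').const_vadd _
  have hKvol : volume K = ENNReal.ofReal ((1 - s)^n) * volume H := by
    rw [hK, measure_vadd, Measure.addHaar_smul, finrank_euclideanSpace_fin,
      abs_of_nonneg (pow_nonneg h1s0.le n)]
  -- K ⊆ positive part of A
  have hKsub : K ⊆ Bpolar ∩ {y | t ≤ ⟪x, y⟫} := by
    rintro w ⟨w', ⟨z, hz, rfl⟩, rfl⟩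
    constructor
    · have := hconv hz.1 hystar_mem h1s0.le hs0.le (by ring)
      simpa [add_comm] using this
    · simp only [mem_setOf_eq, vadd_eq_add]
      rw [inner_add_right, real_inner_smul_right, real_inner_smul_right, hxy]
      have h1 : 0 ≤ (1-s) * ⟪x, z⟫ := mul_nonneg h1s0.le hz.2
      rw [ht]
      linarith
  have hnegKsub : -K ⊆ Bpolar ∩ {y | ⟪x, y⟫ ≤ -t} := by
    intro w hw
    rw [Set.mem_neg] at hw
    have h2 := hKsub hw
    constructor
    · have := hsym _ h2.1; simpa using this
    · have := h2.2
      simp only [mem_setOf_eq] at this ⊢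
      rw [show w = -(-w) by simp, inner_neg_right]
      linarith
  have hKA : K ⊆ A := by
    intro w hw
    refine ⟨(hKsub hw).1, ?_⟩
    have h2 := (hKsub hw).2
    simp only [mem_setOf_eq] at h2 ⊢
    exact le_trans h2 (le_abs_self _)
  have hnegKA : -K ⊆ A := by
    intro w hw
    refine ⟨(hnegKsub hw).1, ?_⟩
    have := (hnegKsub hw).2
    simp only [mem_setOf_eq] at this ⊢
    calc t ≤ -⟪x,w⟫ := by linarith
      _ ≤ |⟪x,w⟫| := neg_le_abs _
  have hdisj : Disjoint K (-K) := by
    rw [Set.disjoint_left]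
    intro w hw hw'
    have h1 := (hKsub hw).2
    have h2 := (hnegKsub hw').2
    simp only [mem_setOf_eq] at h1 h2
    linarith
  -- volume of A
  have hHsub : Bpolar ⊆ H ∪ (-H) := by
    intro y hy
    rcases le_or_gt 0 ⟪x, y⟫ with h | h
    · exact Or.inl ⟨hy, h⟩
    · right
      rw [Set.mem_neg]
      exact ⟨hsym _ hy, by simp only [mem_setOf_eq]; rw [inner_neg_right]; linarith⟩
  have hHvol : volume Bpolar ≤ 2 * volume H := by
    calc volume Bpolar ≤ volume (H ∪ (-H)) := measure_mono hHsub
      _ ≤ volume H + volume (-H) := measure_union_le _ _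
      _ = 2 * volume H := by rw [Measure.measure_neg, two_mul]
  have hAvol : ENNReal.ofReal ((1 - s)^n) * volume Bpolar ≤ volume A := by
    calc ENNReal.ofReal ((1 - s)^n) * volume Bpolar
        ≤ ENNReal.ofReal ((1 - s)^n) * (2 * volume H) :=
          mul_le_mul_right hHvol _
      _ = 2 * volume K := by rw [hKvol, mul_left_comm]
      _ = volume K + volume (-K) := by rw [Measure.measure_neg, two_mul]
      _ = volume (K ∪ (-K)) := (measure_union hdisj hKmeas.neg).symm
      _ ≤ volume A := measure_mono (Set.union_subset hKA hnegKA)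
  have hAvol_fin : volume A < ⊤ := lt_of_le_of_lt (measure_mono (Set.inter_subset_left)) hvol_fin
  have hAvolR : (1 - s)^n * (volume Bpolar).toReal ≤ (volume A).toReal := by
    have := ENNReal.toReal_mono hAvol_fin.ne hAvol
    rwa [ENNReal.toReal_mul, ENNReal.toReal_ofReal (pow_nonneg h1s0.le n)] at this
  -- the integral bound
  have hIntBP : IntegrableOn (fun y : EuclideanSpace ℝ (Fin n) => (⟪x, y⟫:ℝ)^d) Bpolar volume :=
    ContinuousOn.integrableOn_compact hcompact
      ((Continuous.inner continuous_const continuous_id).pow d).continuousOn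
  have hInt1 : ∫ y in A, (⟪x, y⟫:ℝ)^d ≤ ∫ y in Bpolar, (⟪x, y⟫:ℝ)^d := by
    apply setIntegral_mono_set hIntBP
    · filter_upwards with y
      exact hdeven.pow_nonneg _
    · exact HasSubset.Subset.eventuallyLE Set.inter_subset_left
  have hInt2 : (volume A).toReal * t^d ≤ ∫ y in A, (⟪x, y⟫:ℝ)^d := by
    have := setIntegral_mono_on (f := fun _ : EuclideanSpace ℝ (Fin n) => t^d) (g := fun y : EuclideanSpace ℝ (Fin n) => (⟪x, y⟫:ℝ)^d)
      (integrableOn_const hAvol_fin.ne)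
      (hIntBP.mono_set Set.inter_subset_left) hAmeas
      (by
        intro y hy
        have h2 : |t| ≤ |⟪x,y⟫| := by
          rw [abs_of_pos htpos]; exact hy.2
        have h1 : |t| ^ d ≤ |⟪x,y⟫| ^ d := pow_le_pow_left₀ (abs_nonneg t) h2 d
        rwa [abs_of_pos htpos, hdeven.pow_abs] at h1)
    rwa [setIntegral_const, smul_eq_mul] at this
  have hkey : t^d * (1-s)^n ≤ f x := by
    rw [hf]
    have hIge : t^d * ((1-s)^n * (volume Bpolar).toReal) ≤ ∫ y in Bpolar, (⟪x, y⟫:ℝ)^d := by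
      calc t^d * ((1-s)^n * (volume Bpolar).toReal)
          ≤ t^d * (volume A).toReal := by
            apply mul_le_mul_of_nonneg_left hAvolR (by positivity)
        _ = (volume A).toReal * t^d := by ring
        _ ≤ ∫ y in A, (⟪x, y⟫:ℝ)^d := hInt2
        _ ≤ ∫ y in Bpolar, (⟪x, y⟫:ℝ)^d := hInt1
    calc t^d * (1-s)^n
        = ((volume Bpolar).toReal)⁻¹ * (t^d * ((1-s)^n * (volume Bpolar).toReal)) := by
          field_simp
      _ ≤ ((volume Bpolar).toReal)⁻¹ * ∫ y in Bpolar, (⟪x, y⟫:ℝ)^d :=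
          mul_le_mul_of_nonneg_left hIge (by positivity)
  -- final rpow computation
  have hrpow : (t^d * (1-s)^n) ^ ((d:ℝ)⁻¹) = t * (1-s) ^ ((n:ℝ)/d) := by
    have hdne : ((d:ℝ)) ≠ 0 := by positivity
    rw [Real.mul_rpow (pow_nonneg htpos.le d) (pow_nonneg h1s0.le n),
      ← Real.rpow_natCast t d, ← Real.rpow_natCast (1-s) n,
      ← Real.rpow_mul htpos.le, ← Real.rpow_mul h1s0.le,
      mul_inv_cancel₀ hdne, Real.rpow_one]
    rw [div_eq_mul_inv]
  have hfinal : t * (1-s) ^ ((n:ℝ)/d) ≤ f x ^ ((d:ℝ)⁻¹) := by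
    rw [← hrpow]
    exact Real.rpow_le_rpow (by positivity) hkey (by positivity)
  calc ((d:ℝ)/((n:ℝ) + d)) * ((n:ℝ)/((n:ℝ) + d)) ^ ((n:ℝ)/d) * N x
      = t * (1-s) ^ ((n:ℝ)/d) := by rw [← h1s, ht, hs, hr]; ring
    _ ≤ f x ^ ((d:ℝ)⁻¹) := hfinal
end

section
/- The Motzkin polynomial M(x,y) = x⁴y² + x²y⁴ − 3x²y² + 1 is nonnegative on ℝ² but is not a sum of squares of polynomials. -/
open MvPolynomial

private lemma sos_eq_zero' {k : ℕ} (p : Fin k → MvPolynomial (Fin 2) ℝ)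
    (h : ∑ i, (p i)^2 = 0) : ∀ i, p i = 0 := by
  intro i
  apply MvPolynomial.funext
  intro x
  have hx : ∑ j, (eval x (p j))^2 = 0 := by
    have := congrArg (eval x) h
    simpa using this
  have := (Finset.sum_eq_zero_iff_of_nonneg (fun j _ => sq_nonneg (eval x (p j)))).mp hx i
    (Finset.mem_univ i)
  simpa using sq_eq_zero_iff.mp this

private lemma sos_one_const' {k : ℕ} (u : Fin k → Polynomial ℝ)
    (h : ∑ i, (u i)^2 = 1) : ∀ i, (u i).natDegree = 0 := by
  by_contra hc
  push_neg at hc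
  obtain ⟨i0, hi0⟩ := hc
  have hne : Nonempty (Fin k) := ⟨i0⟩
  set d := Finset.univ.sup (fun i => (u i).natDegree) with hd
  have hd1 : 1 ≤ d := by
    calc 1 ≤ (u i0).natDegree := Nat.one_le_iff_ne_zero.mpr hi0
    _ ≤ d := Finset.le_sup (f := fun i => (u i).natDegree) (Finset.mem_univ i0)
  have key : ∀ i, ((u i)^2).coeff (2*d) = ((u i).coeff d)^2 := by
    intro i
    have hle : (u i).natDegree ≤ d := Finset.le_sup (f := fun i => (u i).natDegree)
      (Finset.mem_univ i)
    rcases lt_or_eq_of_le hle with hlt | heq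
    · have h1 : (u i).coeff d = 0 := Polynomial.coeff_eq_zero_of_natDegree_lt hlt
      have h2 : ((u i)^2).coeff (2*d) = 0 := by
        apply Polynomial.coeff_eq_zero_of_natDegree_lt
        calc ((u i)^2).natDegree ≤ 2 * (u i).natDegree := Polynomial.natDegree_pow_le
        _ < 2 * d := by omega
      rw [h1, h2]; ring
    · rw [sq, sq, ← heq]
      have := Polynomial.coeff_mul_degree_add_degree (u i) (u i)
      rw [← two_mul] at this
      rw [this]; rfl
  have hsum : ∑ i, ((u i).coeff d)^2 = 0 := by
    have := congrArg (fun p => Polynomial.coeff p (2*d)) h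
    simp only [Polynomial.finset_sum_coeff] at this
    rw [Finset.sum_congr rfl (fun i _ => key i)] at this
    rw [this, Polynomial.coeff_one, if_neg (by omega)]
  obtain ⟨i, -, hi⟩ := Finset.exists_mem_eq_sup Finset.univ (Finset.univ_nonempty)
    (fun i => (u i).natDegree)
  have hune : u i ≠ 0 := by
    intro h0
    have hd0 : d = 0 := by rw [hd, hi, h0, Polynomial.natDegree_zero]
    omega
  have hcne : (u i).coeff d ≠ 0 := by
    rw [hd, hi]
    exact Polynomial.leadingCoeff_ne_zero.mpr hune
  have := (Finset.sum_eq_zero_iff_of_nonneg (fun j _ => sq_nonneg ((u j).coeff d))).mp hsum i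
    (Finset.mem_univ i)
  exact hcne (by simpa using sq_eq_zero_iff.mp this)

private lemma deg2' (d : Fin 2 →₀ ℕ) : d.degree = d 0 + d 1 := by
  rw [Finsupp.degree_apply, Finset.sum_subset (Finset.subset_univ d.support)
    (fun i _ hi => Finsupp.notMem_support_iff.mp hi), Fin.sum_univ_two]

private lemma tdeg_eq' (p : MvPolynomial (Fin 2) ℝ) :
    p.totalDegree = p.support.sup fun s => s.degree := rfl

private lemma sos_degree_le' {k : ℕ} (q : Fin k → MvPolynomial (Fin 2) ℝ) (N : ℕ)
    (hM : (∑ i, (q i)^2).totalDegree ≤ 2*N) : ∀ i, (q i).totalDegree ≤ N := by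
  by_contra hc
  push_neg at hc
  obtain ⟨i0, hi0⟩ := hc
  have hne : Nonempty (Fin k) := ⟨i0⟩
  set n := Finset.univ.sup (fun i => (q i).totalDegree) with hn
  have hNn : N < n := lt_of_lt_of_le hi0
    (Finset.le_sup (f := fun i => (q i).totalDegree) (Finset.mem_univ i0))
  have hqle : ∀ i, (q i).totalDegree ≤ n := fun i =>
    Finset.le_sup (f := fun i => (q i).totalDegree) (Finset.mem_univ i)
  set h : Fin k → MvPolynomial (Fin 2) ℝ := fun i => homogeneousComponent n (q i) with hh
  have hzero : ∑ i, (h i)^2 = 0 := by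
    apply MvPolynomial.ext
    intro d
    rw [coeff_zero, coeff_sum]
    by_cases hd : d.degree = 2*n
    · have step : ∀ i, coeff d ((h i)^2) = coeff d ((q i)^2) := by
        intro i
        rw [sq, sq, coeff_mul, coeff_mul]
        apply Finset.sum_congr rfl
        intro ab hab
        rw [Finset.HasAntidiagonal.mem_antidiagonal] at hab
        have habdeg : ab.1.degree + ab.2.degree = 2*n := by
          rw [← hd, ← hab, deg2', deg2', deg2']
          simp [Finsupp.add_apply]
          ring
        simp only [hh, coeff_homogeneousComponent]
        by_cases h1 : ab.1.degree = n
        · have h2 : ab.2.degree = n := by omega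
          rw [if_pos h1, if_pos h2]
        · rw [if_neg h1, zero_mul]
          rcases Nat.lt_or_ge ab.1.degree n with hlt | hge
          · have h2 : n < ab.2.degree := by omega
            have : coeff ab.2 (q i) = 0 :=
              coeff_eq_zero_of_totalDegree_lt (lt_of_le_of_lt (hqle i) h2)
            rw [this, mul_zero]
          · have h1' : n < ab.1.degree := lt_of_le_of_ne hge (fun e => h1 e.symm)
            have : coeff ab.1 (q i) = 0 :=
              coeff_eq_zero_of_totalDegree_lt (lt_of_le_of_lt (hqle i) h1')
            rw [this, zero_mul]
      rw [Finset.sum_congr rfl (fun i _ => step i), ← coeff_sum]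
      apply coeff_eq_zero_of_totalDegree_lt
      show (∑ i, (q i)^2).totalDegree < d.degree
      omega
    · apply Finset.sum_eq_zero
      intro i _
      have hhom : ((h i)^2).IsHomogeneous (2*n) := by
        rw [sq, two_mul]
        exact (homogeneousComponent_isHomogeneous n (q i)).mul
          (homogeneousComponent_isHomogeneous n (q i))
      exact hhom.coeff_eq_zero hd
  obtain ⟨i, -, hi⟩ := Finset.exists_mem_eq_sup Finset.univ Finset.univ_nonempty
    (fun i => (q i).totalDegree)
  have hqne : q i ≠ 0 := by
    intro h0
    rw [h0, totalDegree_zero] at hi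
    omega
  obtain ⟨m, hm, hmd⟩ := Finset.exists_mem_eq_sup (q i).support
    (support_nonempty.mpr hqne) (fun s => s.degree)
  have hdegm : m.degree = n := by rw [← hmd, ← tdeg_eq', ← hi]
  have : coeff m (h i) = coeff m (q i) := by
    simp only [hh, coeff_homogeneousComponent, if_pos hdegm]
  have hhz := sos_eq_zero' h hzero i
  rw [hhz, coeff_zero] at this
  exact (mem_support_iff.mp hm) this.symm

private lemma coeff_axis' (e : Fin 2) (q : MvPolynomial (Fin 2) ℝ) (j : ℕ) :
    (aeval (fun i => if i = e then Polynomial.X else 0) q).coeff j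
      = coeff (Finsupp.single e j) q := by
  conv_lhs => rw [← support_sum_monomial_coeff q]
  rw [map_sum, Polynomial.finset_sum_coeff]
  have key : ∀ m : Fin 2 →₀ ℕ,
      ((aeval (fun i => if i = e then Polynomial.X else (0:Polynomial ℝ)))
        ((monomial m) (coeff m q))).coeff j
      = if m = Finsupp.single e j then coeff m q else 0 := by
    intro m
    rw [aeval_monomial]
    rw [Finsupp.prod_fintype _ _ (fun i => pow_zero _)]
    set e' : Fin 2 := if e = 0 then 1 else 0 with he'
    have hprod : (∏ i : Fin 2, (if i = e then Polynomial.X else (0:Polynomial ℝ)) ^ m i)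
        = Polynomial.X ^ m e * (0:Polynomial ℝ) ^ m e' := by
      rw [Fin.prod_univ_two]
      fin_cases e <;> simp [he'] <;> ring
    rw [hprod]
    by_cases hb : m e' = 0
    · rw [hb, pow_zero, mul_one]
      have : (algebraMap ℝ (Polynomial ℝ)) (coeff m q) = Polynomial.C (coeff m q) := rfl
      rw [this, Polynomial.coeff_C_mul, Polynomial.coeff_X_pow]
      by_cases hj : m = Finsupp.single e j
      · rw [if_pos hj, if_pos]
        · ring
        · rw [hj]; simp
      · rw [if_neg hj, if_neg, mul_zero]
        intro hme
        apply hj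
        ext i
        have hi : i = e ∨ i = e' := by fin_cases i <;> fin_cases e <;> simp [he']
        rcases hi with hi | hi
        · rw [hi, hme, Finsupp.single_eq_same]
        · rw [hi, hb, Finsupp.single_apply, if_neg]
          fin_cases e <;> simp_all [he']
    · rw [zero_pow hb, mul_zero, mul_zero, Polynomial.coeff_zero, if_neg]
      intro hme
      apply hb
      rw [hme, Finsupp.single_apply, if_neg]
      fin_cases e <;> simp_all [he']
  rw [Finset.sum_congr rfl (fun m _ => key m)]
  rw [Finset.sum_ite_eq' q.support (Finsupp.single e j) (fun m => coeff m q)]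
  by_cases hs : Finsupp.single e j ∈ q.support
  · rw [if_pos hs]
  · rw [if_neg hs]
    exact (MvPolynomial.notMem_support_iff.mp hs).symm

private lemma fs_ne' (a b c d : ℕ) (h : a ≠ c ∨ b ≠ d) :
    (Finsupp.single (0:Fin 2) a + Finsupp.single 1 b)
      ≠ (Finsupp.single 0 c + Finsupp.single 1 d) := by
  intro he
  rcases h with h | h
  · exact h (by simpa using DFunLike.congr_fun he 0)
  · exact h (by simpa using DFunLike.congr_fun he 1)

private lemma fs_decomp (m : Fin 2 →₀ ℕ) :
    m = Finsupp.single 0 (m 0) + Finsupp.single 1 (m 1) := by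
  ext i
  fin_cases i <;> simp [Finsupp.single_apply]

theorem stmt14 (M : MvPolynomial (Fin 2) ℝ)
    (hM : M = X 0 ^ 4 * X 1 ^ 2 + X 0 ^ 2 * X 1 ^ 4 - C 3 * X 0 ^ 2 * X 1 ^ 2 + 1) :
    (∀ x : Fin 2 → ℝ, 0 ≤ eval x M) ∧
    ¬ ∃ (k : ℕ) (q : Fin k → MvPolynomial (Fin 2) ℝ), M = ∑ i, (q i) ^ 2 := by
  constructor
  · intro x
    simp only [hM, map_add, map_sub, map_mul, map_pow, eval_X, eval_C, map_one]
    nlinarith [sq_nonneg (x 0^2*(x 1)^2 - 1), sq_nonneg ((x 0)^2*x 1 - x 1),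
      sq_nonneg (x 0*(x 1)^2 - x 0), sq_nonneg (x 0*x 1), sq_nonneg ((x 0)^2 - (x 1)^2),
      sq_nonneg (x 0*x 1 - 1)]
  · rintro ⟨k, q, hq⟩
    -- monomial form of M
    have hMm : M = monomial (Finsupp.single 0 4 + Finsupp.single 1 2) 1
        + monomial (Finsupp.single 0 2 + Finsupp.single 1 4) 1
        - monomial (Finsupp.single 0 2 + Finsupp.single 1 2) 3
        + monomial 0 1 := by
      rw [hM, show (1 : MvPolynomial (Fin 2) ℝ) = C 1 from rfl]
      simp only [X_pow_eq_monomial, C_apply, monomial_mul, one_mul, mul_one, zero_add]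
    -- total degree bound
    have hMdeg : M.totalDegree ≤ 6 := by
      rw [hMm]
      refine le_trans (totalDegree_add _ _) (max_le (le_trans (totalDegree_sub _ _)
        (max_le (le_trans (totalDegree_add _ _) (max_le ?_ ?_)) ?_)) ?_) <;>
      · refine le_trans (le_of_eq (totalDegree_monomial _ (by norm_num))) ?_
        rw [show (fun (_ : Fin 2) (e : ℕ) => e) = fun _ e => e from rfl]
        simp [Finsupp.sum_add_index, Finsupp.sum_single_index]
    have hdeg3 : ∀ i, (q i).totalDegree ≤ 3 := by
      apply sos_degree_le'
      rw [← hq]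
      exact le_trans hMdeg (by norm_num)
    -- axis coefficients vanish
    have haxis : ∀ (e : Fin 2) (i : Fin k) (j : ℕ), 1 ≤ j →
        coeff (Finsupp.single e j) (q i) = 0 := by
      intro e i j hj
      have himg : ∑ i, (aeval (fun i => if i = e then Polynomial.X else (0:Polynomial ℝ))
          (q i))^2 = 1 := by
        have := congrArg (aeval (fun i => if i = e then Polynomial.X else (0:Polynomial ℝ))) hq
        rw [map_sum] at this
        simp only [map_pow] at this
        rw [← this]
        fin_cases e <;> simp [hM]
      have hdeg0 := sos_one_const' _ himg i
      have := Polynomial.coeff_eq_zero_of_natDegree_lt (p := aeval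
        (fun i => if i = e then Polynomial.X else (0:Polynomial ℝ)) (q i)) (n := j)
        (by omega)
      rwa [coeff_axis'] at this
    -- coefficient of x^2 y^2
    have hc22 : coeff (Finsupp.single 0 2 + Finsupp.single 1 2) M = -3 := by
      rw [hMm, coeff_add, coeff_sub, coeff_add, coeff_monomial, coeff_monomial,
        coeff_monomial, coeff_monomial]
      rw [if_neg (fs_ne' 4 2 2 2 (Or.inl (by norm_num))),
        if_neg (fs_ne' 2 4 2 2 (Or.inr (by norm_num))), if_pos rfl, if_neg]
      · ring
      · intro he
        have := DFunLike.congr_fun he 0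
        simp at this
    have hge : (0:ℝ) ≤ coeff (Finsupp.single 0 2 + Finsupp.single 1 2) M := by
      rw [hq, coeff_sum]
      apply Finset.sum_nonneg
      intro i _
      rw [sq, coeff_mul]
      apply Finset.sum_nonneg
      intro ab hab
      rw [Finset.HasAntidiagonal.mem_antidiagonal] at hab
      have ha0 : ab.1 0 + ab.2 0 = 2 := by
        have := DFunLike.congr_fun hab 0
        simpa [Finsupp.single_apply] using this
      have ha1 : ab.1 1 + ab.2 1 = 2 := by
        have := DFunLike.congr_fun hab 1
        simpa [Finsupp.single_apply] using this
      -- show each factor situation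
      by_cases hz1 : coeff ab.1 (q i) = 0
      · rw [hz1, zero_mul]
      by_cases hz2 : coeff ab.2 (q i) = 0
      · rw [hz2, mul_zero]
      have hky : ∀ m : Fin 2 →₀ ℕ, coeff m (q i) ≠ 0 → m 0 + m 1 = 4 → False := by
        intro m hmne hm4
        apply hmne
        apply coeff_eq_zero_of_totalDegree_lt
        calc (q i).totalDegree ≤ 3 := hdeg3 i
        _ < ∑ j ∈ m.support, m j := by
          have : (∑ j ∈ m.support, m j) = m.degree := rfl
          rw [this, deg2', hm4]
          norm_num
      have hgood : ∀ m m' : Fin 2 →₀ ℕ, m + m' = Finsupp.single 0 2 + Finsupp.single 1 2 →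
          coeff m (q i) ≠ 0 → coeff m' (q i) ≠ 0 → 1 ≤ m 0 ∧ 1 ≤ m 1 := by
        intro m m' hsum hne hne'
        have h0 : m 0 + m' 0 = 2 := by
          have := DFunLike.congr_fun hsum 0
          simpa [Finsupp.single_apply] using this
        have h1 : m 1 + m' 1 = 2 := by
          have := DFunLike.congr_fun hsum 1
          simpa [Finsupp.single_apply] using this
        constructor
        · by_contra hm0
          have hm0' : m 0 = 0 := by omega
          by_cases hm1 : m 1 = 0
          · -- m = 0, so m' has degree 4
            apply hky m' hne'
            omega
          · apply hne
            rw [fs_decomp m, hm0', Finsupp.single_zero, zero_add]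
            exact haxis 1 i (m 1) (by omega)
        · by_contra hm1
          have hm1' : m 1 = 0 := by omega
          by_cases hm0 : m 0 = 0
          · apply hky m' hne'
            omega
          · apply hne
            rw [fs_decomp m, hm1', Finsupp.single_zero, add_zero]
            exact haxis 0 i (m 0) (by omega)
      obtain ⟨hA0, hA1⟩ := hgood ab.1 ab.2 hab hz1 hz2
      obtain ⟨hB0, hB1⟩ := hgood ab.2 ab.1 (by rw [add_comm]; exact hab) hz2 hz1
      have heq : ab.1 = ab.2 := by
        rw [fs_decomp ab.1, fs_decomp ab.2]
        have e0 : ab.1 0 = ab.2 0 := by omega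
        have e1 : ab.1 1 = ab.2 1 := by omega
        rw [e0, e1]
      rw [heq]
      exact mul_self_nonneg _
    linarith [hc22, hge]
end

section
/- Let A ∈ ℝⁿˣⁿ. The spectral radius of A is strictly less than 1 if and only if there exists a positive definite symmetric matrix Q such that the quadratic norm V(x) = √(xᵀQx) satisfies V(Ax) < V(x) for all x ≠ 0. -/
open Matrix Filter

private lemma entry_bound' (n : ℕ) (A : Matrix (Fin n) (Fin n) ℝ)
    (h : ∀ μ : ℂ, μ ∈ spectrum ℂ (A.map (algebraMap ℝ ℂ)) → ‖μ‖ < 1) :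
    ∃ r C : ℝ, 0 ≤ r ∧ r < 1 ∧ 0 ≤ C ∧ ∀ (k : ℕ) (i j : Fin n), |(A ^ k) i j| ≤ C * r ^ k := by
  rcases Nat.eq_zero_or_pos n with hn | hn
  · subst hn
    exact ⟨0, 0, le_rfl, one_pos, le_rfl, fun k i j => i.elim0⟩
  haveI : Nonempty (Fin n) := ⟨⟨0, hn⟩⟩
  letI : NormedRing (Matrix (Fin n) (Fin n) ℂ) := Matrix.linftyOpNormedRing
  letI : NormedAlgebra ℂ (Matrix (Fin n) (Fin n) ℂ) := Matrix.linftyOpNormedAlgebra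
  haveI : CompleteSpace (Matrix (Fin n) (Fin n) ℂ) := FiniteDimensional.complete ℂ _
  set Ac := A.map (algebraMap ℝ ℂ) with hAcdef
  have hρ : spectralRadius ℂ Ac < 1 := by
    have := spectrum.spectralRadius_lt_of_forall_lt Ac (r := 1)
      (fun z hz => by simpa [← NNReal.coe_lt_coe, coe_nnnorm] using h z hz)
    simpa using this
  obtain ⟨r', hr1, hr2⟩ := exists_between hρ
  lift r' to NNReal using hr2.ne_top
  have hr2' : (r' : ℝ) < 1 := by exact_mod_cast hr2
  have hev := (spectrum.pow_nnnorm_pow_one_div_tendsto_nhds_spectralRadius Ac).eventually_lt_const hr1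
  obtain ⟨N, hN⟩ := Filter.eventually_atTop.mp hev
  have key : ∀ k, N + 1 ≤ k → ‖Ac ^ k‖ ≤ (r' : ℝ) ^ k := by
    intro k hk
    have hk0 : (k : ℝ) ≠ 0 := Nat.cast_ne_zero.mpr (by omega)
    have h1 : (‖Ac ^ k‖₊ : ENNReal) ^ (1 / (k : ℝ)) ≤ (r' : ENNReal) :=
      (hN k (by omega)).le
    have h2 : ((‖Ac ^ k‖₊ : ENNReal) ^ (1 / (k : ℝ))) ^ (k : ℝ) ≤ ((r' : ENNReal)) ^ (k : ℝ) :=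
      ENNReal.rpow_le_rpow h1 (by positivity)
    rw [← ENNReal.rpow_mul, one_div, inv_mul_cancel₀ hk0, ENNReal.rpow_one] at h2
    rw [ENNReal.rpow_natCast, ← ENNReal.coe_pow, ENNReal.coe_le_coe] at h2
    calc ‖Ac ^ k‖ = ((‖Ac ^ k‖₊ : NNReal) : ℝ) := rfl
      _ ≤ ((r' ^ k : NNReal) : ℝ) := by exact_mod_cast h2
      _ = (r' : ℝ) ^ k := by push_cast; ring
  set r : ℝ := max (r' : ℝ) (1/2) with hrdef
  have hrpos : 0 < r := lt_max_of_lt_right (by norm_num)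
  have hrlt : r < 1 := max_lt hr2' (by norm_num)
  have hr'le : ∀ k : ℕ, (r' : ℝ) ^ k ≤ r ^ k := fun k =>
    pow_le_pow_left₀ r'.coe_nonneg (le_max_left _ _) k
  set C : ℝ := 1 + ∑ k ∈ Finset.range (N + 1), ‖Ac ^ k‖ / r ^ k with hCdef
  have hterm : ∀ k, 0 ≤ ‖Ac ^ k‖ / r ^ k := fun k => by positivity
  have hC1 : (1 : ℝ) ≤ C := le_add_of_nonneg_right (Finset.sum_nonneg fun k _ => hterm k)
  have hCk : ∀ k : ℕ, ‖Ac ^ k‖ ≤ C * r ^ k := by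
    intro k
    rcases le_or_gt k N with hkN | hkN
    · have hmem : k ∈ Finset.range (N + 1) := Finset.mem_range.mpr (by omega)
      have := Finset.single_le_sum (f := fun k => ‖Ac ^ k‖ / r ^ k) (fun i _ => hterm i) hmem
      have h3 : ‖Ac ^ k‖ / r ^ k ≤ C := this.trans (le_add_of_nonneg_left one_pos.le)
      calc ‖Ac ^ k‖ = (‖Ac ^ k‖ / r ^ k) * r ^ k := by field_simp
        _ ≤ C * r ^ k := by
            apply mul_le_mul_of_nonneg_right h3 (by positivity)
    · calc ‖Ac ^ k‖ ≤ (r' : ℝ) ^ k := key k (by omega)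
        _ ≤ r ^ k := hr'le k
        _ ≤ C * r ^ k := le_mul_of_one_le_left (by positivity) hC1
  have hmap : ∀ k : ℕ, Ac ^ k = (A ^ k).map (algebraMap ℝ ℂ) := by
    intro k
    rw [hAcdef, ← RingHom.mapMatrix_apply, ← RingHom.mapMatrix_apply, ← map_pow]
  refine ⟨r, C, hrpos.le, hrlt, le_trans one_pos.le hC1, fun k i j => ?_⟩
  have hentry : |(A ^ k) i j| = ‖(Ac ^ k) i j‖ := by
    rw [hmap k]; simp [Matrix.map_apply, Complex.norm_real, Real.norm_eq_abs]
  rw [hentry]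
  calc ‖(Ac ^ k) i j‖ ≤ ‖Ac ^ k‖ := by
        have h4 : ‖(Ac ^ k) i j‖₊ ≤ ‖Ac ^ k‖₊ := by
          rw [Matrix.linfty_opNNNorm_def]
          exact le_trans (Finset.single_le_sum (f := fun j => ‖(Ac ^ k) i j‖₊)
            (fun _ _ => zero_le) (Finset.mem_univ j)) (Finset.le_sup (f := fun i => ∑ j, ‖(Ac ^ k) i j‖₊) (Finset.mem_univ i))
        exact_mod_cast h4
    _ ≤ C * r ^ k := hCk k

open Matrix
theorem stmt18 (n : ℕ) (A : Matrix (Fin n) (Fin n) ℝ) :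
    (∀ μ : ℂ, μ ∈ spectrum ℂ (A.map (algebraMap ℝ ℂ)) → ‖μ‖ < 1) ↔
    ∃ Q : Matrix (Fin n) (Fin n) ℝ, Q.PosDef ∧
      ∀ x : Fin n → ℝ, x ≠ 0 →
        Real.sqrt ((A.mulVec x) ⬝ᵥ Q.mulVec (A.mulVec x)) <
          Real.sqrt (x ⬝ᵥ Q.mulVec x) := by
  constructor
  · intro h
    obtain ⟨r, C, hr0, hr1, hC0, hbd⟩ := entry_bound' n A h
    set g : ℕ → Matrix (Fin n) (Fin n) ℝ := fun k => (A ^ k)ᵀ * (A ^ k) with hg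
    have hgsym : ∀ k (i j : Fin n), g k i j = g k j i := by
      intro k i j
      simp only [hg, Matrix.mul_apply, Matrix.transpose_apply]
      exact Finset.sum_congr rfl fun l _ => mul_comm _ _
    have hsummable : ∀ i j : Fin n, Summable fun k => g k i j := by
      intro i j
      apply Summable.of_norm_bounded (g := fun k => (n * C ^ 2) * (r ^ 2) ^ k)
        (Summable.mul_left _ (summable_geometric_of_lt_one (by positivity) (by nlinarith)))
      intro k
      rw [Real.norm_eq_abs]
      calc |g k i j| ≤ ∑ l, |(A ^ k) l i * (A ^ k) l j| := by
            simp only [hg, Matrix.mul_apply, Matrix.transpose_apply]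
            exact Finset.abs_sum_le_sum_abs _ _
        _ ≤ ∑ _l : Fin n, (C * r ^ k) * (C * r ^ k) := Finset.sum_le_sum fun l _ => by
            rw [abs_mul]
            exact mul_le_mul (hbd k l i) (hbd k l j) (abs_nonneg _) (by positivity)
        _ = (n * C ^ 2) * (r ^ 2) ^ k := by
            rw [Finset.sum_const, Finset.card_univ, Fintype.card_fin, nsmul_eq_mul]
            ring
    set Q : Matrix (Fin n) (Fin n) ℝ := Matrix.of fun i j => ∑' k, g k i j with hQdef
    have hQapp : ∀ i j : Fin n, Q i j = ∑' k, g k i j := fun i j => rfl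
    set F : (Fin n → ℝ) → ℕ → ℝ := fun x k => (A ^ k *ᵥ x) ⬝ᵥ (A ^ k *ᵥ x) with hF
    have hFq : ∀ (x : Fin n → ℝ) (k : ℕ), x ⬝ᵥ (g k) *ᵥ x = F x k := by
      intro x k
      rw [hg, hF, ← Matrix.mulVec_mulVec, Matrix.dotProduct_mulVec, Matrix.vecMul_transpose]
    have hst : ∀ (x : Fin n → ℝ) (i j : Fin n), Summable fun k => x i * (g k i j * x j) :=
      fun x i j => ((hsummable i j).mul_right (x j)).mul_left (x i)
    have hexpand : ∀ (M : Matrix (Fin n) (Fin n) ℝ) (x : Fin n → ℝ),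
        x ⬝ᵥ M *ᵥ x = ∑ i, ∑ j, x i * (M i j * x j) := by
      intro M x
      simp only [dotProduct, Matrix.mulVec, Finset.mul_sum]
    have hQuad : ∀ x : Fin n → ℝ, x ⬝ᵥ Q *ᵥ x = ∑' k, F x k := by
      intro x
      rw [hexpand]
      have h2 : ∀ i j : Fin n, x i * (Q i j * x j) = ∑' k, x i * (g k i j * x j) := by
        intro i j
        rw [hQapp, ← tsum_mul_right, ← tsum_mul_left]
      simp only [h2]
      calc ∑ i, ∑ j, ∑' k, x i * (g k i j * x j)
          = ∑ i, ∑' k, ∑ j, x i * (g k i j * x j) :=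
            Finset.sum_congr rfl fun i _ => (Summable.tsum_finsetSum fun j _ => hst x i j).symm
        _ = ∑' k, ∑ i, ∑ j, x i * (g k i j * x j) :=
            (Summable.tsum_finsetSum fun i _ => summable_sum fun j _ => hst x i j).symm
        _ = ∑' k, F x k := tsum_congr fun k => by rw [← hFq x k, hexpand]
    have hsumF : ∀ x : Fin n → ℝ, Summable (F x) := by
      intro x
      have : Summable fun k => ∑ i, ∑ j, x i * (g k i j * x j) :=
        summable_sum fun i _ => summable_sum fun j _ => hst x i j
      apply this.congr
      intro k
      rw [← hFq x k, hexpand]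
    have hFnonneg : ∀ (x : Fin n → ℝ) (k : ℕ), 0 ≤ F x k := fun x k =>
      Finset.sum_nonneg fun i _ => mul_self_nonneg _
    have hF0 : ∀ x : Fin n → ℝ, F x 0 = x ⬝ᵥ x := by
      intro x; simp [hF]
    have hF0pos : ∀ x : Fin n → ℝ, x ≠ 0 → 0 < F x 0 := by
      intro x hx
      rw [hF0]
      obtain ⟨i, hi⟩ := Function.ne_iff.mp hx
      exact Finset.sum_pos' (fun i _ => mul_self_nonneg _)
        ⟨i, Finset.mem_univ i, mul_self_pos.mpr hi⟩
    have hshift : ∀ (x : Fin n → ℝ) (k : ℕ), F (A *ᵥ x) k = F x (k + 1) := by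
      intro x k
      simp only [hF, Matrix.mulVec_mulVec, ← pow_succ]
    have hQpos : Q.PosDef := by
      rw [posDef_iff_dotProduct_mulVec]
      constructor
      · ext i j
        simp only [Matrix.conjTranspose_apply, star_trivial, hQapp]
        exact tsum_congr fun k => hgsym k j i
      · intro x hx
        have hsx : star x = x := funext fun i => star_trivial _
        rw [hsx, hQuad]
        exact Summable.tsum_pos (hsumF x) (hFnonneg x) 0 (hF0pos x hx)
    refine ⟨Q, hQpos, fun x hx => ?_⟩
    have hsum1 : Summable fun k => F x (k + 1) := (summable_nat_add_iff 1).mpr (hsumF x)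
    have hLHS : (A *ᵥ x) ⬝ᵥ Q *ᵥ (A *ᵥ x) = ∑' k, F x (k + 1) := by
      rw [hQuad]
      exact tsum_congr fun k => hshift x k
    have hRHS : x ⬝ᵥ Q *ᵥ x = F x 0 + ∑' k, F x (k + 1) := by
      rw [hQuad]
      exact Summable.tsum_eq_zero_add (hsumF x)
    apply Real.sqrt_lt_sqrt
    · rw [hLHS]
      exact tsum_nonneg fun k => hFnonneg x _
    · rw [hLHS, hRHS]
      exact lt_add_of_pos_left _ (hF0pos x hx)
  · rintro ⟨Q, hQ, hV⟩ μ hμ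
    have hstar : ∀ x : Fin n → ℝ, star x = x := fun x => funext fun i => star_trivial _
    have hnonneg : ∀ x : Fin n → ℝ, 0 ≤ x ⬝ᵥ Q *ᵥ x := by
      intro x
      have := (posSemidef_iff_dotProduct_mulVec.mp hQ.posSemidef).2 x
      rwa [hstar] at this
    have hposq : ∀ x : Fin n → ℝ, x ≠ 0 → 0 < x ⬝ᵥ Q *ᵥ x := by
      intro x hx
      have := (posDef_iff_dotProduct_mulVec.mp hQ).2 hx
      rwa [hstar] at this
    -- quadratic strict decrease
    have hq : ∀ x : Fin n → ℝ, x ≠ 0 → (A *ᵥ x) ⬝ᵥ Q *ᵥ (A *ᵥ x) < x ⬝ᵥ Q *ᵥ x := by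
      intro x hx
      have h1 := hV x hx
      have h2 := hnonneg (A *ᵥ x)
      nlinarith [Real.sq_sqrt h2, Real.sq_sqrt (hnonneg x), Real.sqrt_nonneg ((A *ᵥ x) ⬝ᵥ Q *ᵥ (A *ᵥ x)), Real.sqrt_nonneg (x ⬝ᵥ Q *ᵥ x)]
    -- weak decrease (covers x = 0)
    have hqle : ∀ x : Fin n → ℝ, (A *ᵥ x) ⬝ᵥ Q *ᵥ (A *ᵥ x) ≤ x ⬝ᵥ Q *ᵥ x := by
      intro x
      by_cases hx : x = 0
      · subst hx; simp
      · exact (hq x hx).le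
    -- eigenvector
    set Ac := A.map (algebraMap ℝ ℂ) with hAcdef
    rw [spectrum.mem_iff] at hμ
    have hdet : (algebraMap ℂ (Matrix (Fin n) (Fin n) ℂ) μ - Ac).det = 0 := by
      by_contra hd
      exact hμ ((Matrix.isUnit_iff_isUnit_det _).mpr (isUnit_iff_ne_zero.mpr hd))
    obtain ⟨v, hv0, hv⟩ := Matrix.exists_mulVec_eq_zero_iff.mpr hdet
    have hv' : Ac *ᵥ v = μ • v := by
      have h1 : algebraMap ℂ (Matrix (Fin n) (Fin n) ℂ) μ = μ • (1 : Matrix (Fin n) (Fin n) ℂ) :=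
        Algebra.algebraMap_eq_smul_one μ
      rw [Matrix.sub_mulVec, h1, Matrix.smul_mulVec, Matrix.one_mulVec, sub_eq_zero] at hv
      exact hv.symm
    set a : Fin n → ℝ := fun i => (v i).re with ha
    set b : Fin n → ℝ := fun i => (v i).im with hb
    set c : ℝ := μ.re with hc
    set d : ℝ := μ.im with hd
    have hcomp : ∀ i, ∑ j, (A i j : ℂ) * v j = μ * v i := by
      intro i
      have := congrFun hv' i
      simpa [Matrix.mulVec, dotProduct, hAcdef, Matrix.map_apply] using this
    have hA_a : A *ᵥ a = c • a - d • b := by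
      funext i
      have := congrArg Complex.re (hcomp i)
      rw [Complex.re_sum] at this
      simpa [Matrix.mulVec, dotProduct, Complex.mul_re, ha, hb, hc, hd, mul_comm] using this
    have hA_b : A *ᵥ b = d • a + c • b := by
      funext i
      have := congrArg Complex.im (hcomp i)
      rw [Complex.im_sum] at this
      simpa [Matrix.mulVec, dotProduct, Complex.mul_im, ha, hb, hc, hd, mul_comm, add_comm] using this
    -- bilinear symmetry
    have hBsym : ∀ x y : Fin n → ℝ, x ⬝ᵥ Q *ᵥ y = y ⬝ᵥ Q *ᵥ x := by
      intro x y
      rw [Matrix.dotProduct_mulVec, ← Matrix.mulVec_transpose]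
      have hQt : Qᵀ = Q := by
        have := hQ.1
        rwa [Matrix.IsHermitian, conjTranspose_eq_transpose_of_trivial] at this
      rw [hQt, dotProduct_comm]
    have hbil : ∀ (s t : ℝ) (x y : Fin n → ℝ),
        (s • x + t • y) ⬝ᵥ Q *ᵥ (s • x + t • y) =
          s * s * (x ⬝ᵥ Q *ᵥ x) + s * t * (x ⬝ᵥ Q *ᵥ y) + t * s * (y ⬝ᵥ Q *ᵥ x)
            + t * t * (y ⬝ᵥ Q *ᵥ y) := by
      intro s t x y
      simp only [Matrix.mulVec_add, Matrix.mulVec_smul, dotProduct_add, add_dotProduct,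
        smul_dotProduct, dotProduct_smul, smul_eq_mul]
      ring
    have hkey : (A *ᵥ a) ⬝ᵥ Q *ᵥ (A *ᵥ a) + (A *ᵥ b) ⬝ᵥ Q *ᵥ (A *ᵥ b)
        = (c ^ 2 + d ^ 2) * (a ⬝ᵥ Q *ᵥ a + b ⬝ᵥ Q *ᵥ b) := by
      have h1 : c • a - d • b = c • a + (-d) • b := by
        funext i; simp [sub_eq_add_neg]
      rw [hA_a, hA_b, h1, hbil, hbil, hBsym b a]
      ring
    -- one of a, b nonzero
    have hab : a ≠ 0 ∨ b ≠ 0 := by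
      by_contra hcon
      push_neg at hcon
      obtain ⟨ha0, hb0⟩ := hcon
      apply hv0
      funext i
      have h1 : (v i).re = 0 := congrFun ha0 i
      have h2 : (v i).im = 0 := congrFun hb0 i
      exact Complex.ext h1 h2
    have hlt : (A *ᵥ a) ⬝ᵥ Q *ᵥ (A *ᵥ a) + (A *ᵥ b) ⬝ᵥ Q *ᵥ (A *ᵥ b)
        < a ⬝ᵥ Q *ᵥ a + b ⬝ᵥ Q *ᵥ b := by
      rcases hab with ha0 | hb0
      · exact add_lt_add_of_lt_of_le (hq a ha0) (hqle b)
      · exact add_lt_add_of_le_of_lt (hqle a) (hq b hb0)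
    have hpos : 0 < a ⬝ᵥ Q *ᵥ a + b ⬝ᵥ Q *ᵥ b := by
      rcases hab with ha0 | hb0
      · exact add_pos_of_pos_of_nonneg (hposq a ha0) (hnonneg b)
      · exact add_pos_of_nonneg_of_pos (hnonneg a) (hposq b hb0)
    have hcd : c ^ 2 + d ^ 2 < 1 := by
      rw [hkey] at hlt
      exact (mul_lt_iff_lt_one_left hpos).mp hlt
    have hnormsq : ‖μ‖ ^ 2 = c ^ 2 + d ^ 2 := by
      rw [Complex.sq_norm, Complex.normSq_apply]
      ring
    nlinarith [norm_nonneg μ]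
end
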